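/- There is an adjoint quintuple between FintypeCat and the category Dir of Dirichlet functors: the functor n ↦ n·0^𝓎 (the n-fold coproduct of the presheaf Fin(–, 0)) is left adjoint to evaluation at 0 (D ↦ D(0)), which is left adjoint to the constant functor (n ↦ the constant presheaf with value n), which is left adjoint to evaluation at 1 (D ↦ D(1)), which is left adjoint to the Yoneda embedding restricted to Dir (n ↦ Fin(–, n)). -/

import Mathlib

/- STATEMENT 11: There is an adjoint quintuple between `FintypeCat` and the category `Dir` of
Dirichlet functors: `n ↦ n·0^𝓎` (the `n`-fold coproduct of `Fin(–, 0)`) is left adjoint to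
evaluation at `0` (`D ↦ D(0)`), which is left adjoint to the constant functor (`n ↦` the
`n`-fold coproduct of the terminal presheaf `Fin(–, 1)`), which is left adjoint to evaluation
at `1` (`D ↦ D(1)`), which is left adjoint to the Yoneda embedding restricted to `Dir`
(`n ↦ Fin(–, n)`). -/

open CategoryTheory CategoryTheory.Limits Opposite

noncomputable section

attribute [local instance] FintypeCat.fintype

noncomputable instance (X Y : FintypeCat.{0}) : Fintype (X ⟶ Y) := by
  classical
  exact Fintype.ofInjective (fun f : X ⟶ Y => (fun x => f x : X → Y))
    (fun f g h => FintypeCat.hom_ext _ _ (fun x => congrFun h x))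

/-- The finite coproduct `∐ᵢ Fin(–, dᵢ)` of representable presheaves `FintypeCatᵒᵖ ⥤ FintypeCat`. -/
def dirichletSum {I : Type} [Fintype I] (d : I → FintypeCat.{0}) :
    FintypeCat.{0}ᵒᵖ ⥤ FintypeCat.{0} where
  obj X := FintypeCat.of (Σ i, (X.unop ⟶ d i))
  map f := FintypeCat.homMk (fun x => ⟨x.1, f.unop ≫ x.2⟩)

/-- A Dirichlet functor is a finite coproduct of representable presheaves. -/
def IsDirichlet (D : FintypeCat.{0}ᵒᵖ ⥤ FintypeCat.{0}) : Prop :=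
  ∃ (I : Type) (_ : Fintype I) (d : I → FintypeCat.{0}), Nonempty (D ≅ dirichletSum d)

/-- The category of Dirichlet functors. -/
abbrev DirCat := ObjectProperty.FullSubcategory IsDirichlet

/-- The empty finite set `0`. -/
abbrev X0 : FintypeCat.{0} := FintypeCat.of PEmpty

/-- A one-element finite set `1`. -/
abbrev X1 : FintypeCat.{0} := FintypeCat.of PUnit

def repFun (k : FintypeCat.{0}) : FintypeCat.{0} ⥤ DirCat where
  obj n := ⟨dirichletSum (fun _ : n => k), ⟨n, inferInstance, _, ⟨Iso.refl _⟩⟩⟩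
  map {n m} f := { hom := { app := fun X => FintypeCat.homMk (fun x => ⟨f x.1, x.2⟩) } }

def evalFun (k : FintypeCat.{0}) : DirCat ⥤ FintypeCat.{0} where
  obj D := D.obj.obj (op k)
  map α := α.hom.app (op k)

def yonFun : FintypeCat.{0} ⥤ DirCat where
  obj n := ⟨dirichletSum (fun _ : PUnit => n), ⟨PUnit, inferInstance, _, ⟨Iso.refl _⟩⟩⟩
  map {n m} f := { hom := { app := fun X => FintypeCat.homMk (fun x => ⟨x.1, x.2 ≫ f⟩) } }

def repAdj (k : FintypeCat.{0}) : repFun k ⊣ evalFun k :=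
  Adjunction.mkOfHomEquiv
    { homEquiv := fun n D =>
        { toFun := fun α => FintypeCat.homMk fun i => α.hom.app (op k) ⟨i, 𝟙 k⟩
          invFun := fun f =>
            ObjectProperty.homMk
            { app := fun X => FintypeCat.homMk (fun x => D.obj.map x.2.op (f x.1))
              naturality := by
                intro X Y g
                apply FintypeCat.hom_ext; intro x
                change D.obj.map (g.unop ≫ x.2).op (f x.1) = D.obj.map g (D.obj.map x.2.op (f x.1))
                rw [op_comp, D.obj.map_comp]
                rfl }
          right_inv := by
            intro f
            apply FintypeCat.hom_ext; intro i
            change D.obj.map (𝟙 k).op (f i) = f i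
            exact congrArg (fun h => h (f i)) (D.obj.map_id (op k))
          left_inv := by
            intro α
            apply ObjectProperty.hom_ext; apply NatTrans.ext
            funext X; apply FintypeCat.hom_ext; intro x
            change D.obj.map x.2.op (α.hom.app (op k) ⟨x.1, 𝟙 k⟩) = α.hom.app X x
            have := congrArg (fun h => h ⟨x.1, 𝟙 k⟩) (α.hom.naturality x.2.op)
            simp only [FintypeCat.comp_apply] at this
            exact this.symm } }

lemma map_map (D : FintypeCat.{0}ᵒᵖ ⥤ FintypeCat.{0}) {X Y : FintypeCat.{0}ᵒᵖ} (g : X ⟶ Y)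
    {Z : FintypeCat.{0}} (h : Z ⟶ Y.unop) (x : D.obj X) :
    D.map h.op (D.map g x) = D.map (h ≫ g.unop).op x := by
  change (D.map g ≫ D.map h.op) x = _
  rw [← D.map_comp]
  rfl

def emptyHom (X : FintypeCat.{0}) : X0 ⟶ X := FintypeCat.homMk (fun e => e.elim)

lemma emptyHom_unique {X : FintypeCat.{0}} (f g : X0 ⟶ X) : f = g := by
  apply FintypeCat.hom_ext; intro e; exact e.elim

def cstAdj : evalFun X0 ⊣ repFun X1 :=
  Adjunction.mkOfHomEquiv
    { homEquiv := fun D n =>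
        { toFun := fun f =>
            ObjectProperty.homMk
            { app := fun X => FintypeCat.homMk (fun x => ⟨f (D.obj.map (emptyHom X.unop).op x), FintypeCat.homMk fun _ => PUnit.unit⟩)
              naturality := by
                intro X Y g
                apply FintypeCat.hom_ext; intro x
                change (⟨f (D.obj.map (emptyHom Y.unop).op (D.obj.map g x)), FintypeCat.homMk fun _ => PUnit.unit⟩ :
                    (((repFun X1).obj n).obj.obj Y))
                  = ⟨f (D.obj.map (emptyHom X.unop).op x), g.unop ≫ FintypeCat.homMk fun _ => PUnit.unit⟩
                rw [map_map, emptyHom_unique (emptyHom Y.unop ≫ g.unop) (emptyHom X.unop)]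
                congr 1 }
          invFun := fun α => FintypeCat.homMk fun z => (α.hom.app (op X0) z).1
          left_inv := by
            intro f
            apply FintypeCat.hom_ext; intro z
            change f (D.obj.map (emptyHom X0).op z) = f z
            have : emptyHom X0 = 𝟙 X0 := emptyHom_unique _ _
            rw [this]
            exact congrArg (fun z => f z) (congrArg (fun h => h z) (D.obj.map_id (op X0)))
          right_inv := by
            intro α
            apply ObjectProperty.hom_ext; apply NatTrans.ext
            funext X; apply FintypeCat.hom_ext; intro x
            have := congrArg (fun h => h x) (α.hom.naturality (emptyHom X.unop).op)
            simp only [FintypeCat.comp_apply] at this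
            change (⟨(α.hom.app (op X0) (D.obj.map (emptyHom X.unop).op x)).1, FintypeCat.homMk fun _ => PUnit.unit⟩ :
                (((repFun X1).obj n).obj.obj X)) = α.hom.app X x
            rw [this]
            exact Sigma.ext rfl (heq_of_eq (FintypeCat.hom_ext _ _ fun u => rfl)) } }

def ptHom {X : FintypeCat.{0}} (x : X) : X1 ⟶ X := FintypeCat.homMk fun _ => x

def yonAdj : evalFun X1 ⊣ yonFun :=
  Adjunction.mkOfHomEquiv
    { homEquiv := fun D n =>
        { toFun := fun f =>
            ObjectProperty.homMk
            { app := fun X => FintypeCat.homMk (fun d => ⟨PUnit.unit, FintypeCat.homMk fun x => f (D.obj.map (ptHom x).op d)⟩)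
              naturality := by
                intro X Y g
                apply FintypeCat.hom_ext; intro d
                change (⟨PUnit.unit, FintypeCat.homMk fun y => f (D.obj.map (ptHom y).op (D.obj.map g d))⟩ :
                    ((yonFun.obj n).obj.obj Y))
                  = ⟨PUnit.unit, FintypeCat.homMk fun y => f (D.obj.map (ptHom (g.unop y)).op d)⟩
                congr 1
                apply FintypeCat.hom_ext; intro y
                exact congrArg (fun z => f z) (map_map D.obj g (ptHom y) d) }
          invFun := fun α => FintypeCat.homMk fun z => (α.hom.app (op X1) z).2 PUnit.unit
          left_inv := by
            intro f
            apply FintypeCat.hom_ext; intro z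
            change f (D.obj.map (ptHom PUnit.unit).op z) = f z
            have : ptHom (PUnit.unit : X1) = 𝟙 X1 := rfl
            rw [this]
            exact congrArg (fun z => f z) (congrArg (fun h => h z) (D.obj.map_id (op X1)))
          right_inv := by
            intro α
            apply ObjectProperty.hom_ext; apply NatTrans.ext
            funext X; apply FintypeCat.hom_ext; intro d
            have key : ∀ x : X.unop, α.hom.app (op X1) (D.obj.map (ptHom x).op d) =
                ((yonFun.obj n).obj.map (ptHom x).op) (α.hom.app X d) := fun x =>
              congrArg (fun h => h d) (α.hom.naturality (ptHom x).op)
            have h1 : ∀ x : X.unop,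
                (α.hom.app (op X1) (D.obj.map (ptHom x).op d)).2 PUnit.unit = (α.hom.app X d).2 x :=
              fun x => by rw [key x]; rfl
            change (⟨PUnit.unit, FintypeCat.homMk fun x => (α.hom.app (op X1) (D.obj.map (ptHom x).op d)).2 PUnit.unit⟩ :
                ((yonFun.obj n).obj.obj X)) = α.hom.app X d
            exact Sigma.ext (Subsingleton.elim _ _) (heq_of_eq (FintypeCat.hom_ext _ _ h1)) } }

theorem dir_adjoint_quintuple :
    ∃ (L : FintypeCat.{0} ⥤ DirCat) (E0 : DirCat ⥤ FintypeCat.{0})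
      (Cst : FintypeCat.{0} ⥤ DirCat) (E1 : DirCat ⥤ FintypeCat.{0})
      (Y : FintypeCat.{0} ⥤ DirCat),
      -- `L` sends a finite set `n` to `n·0^𝓎`, the `n`-fold coproduct of `Fin(–, 0)`
      (∀ n : FintypeCat.{0}, Nonempty ((L.obj n).obj ≅ dirichletSum (fun _ : n => X0))) ∧
      -- `E0` is evaluation at `0`
      (∀ D : DirCat, Nonempty (E0.obj D ≅ D.obj.obj (op X0))) ∧
      -- `Cst` sends a finite set `n` to the constant presheaf `n`,
      -- the `n`-fold coproduct of the terminal presheaf `Fin(–, 1)`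
      (∀ n : FintypeCat.{0}, Nonempty ((Cst.obj n).obj ≅ dirichletSum (fun _ : n => X1))) ∧
      -- `E1` is evaluation at `1`
      (∀ D : DirCat, Nonempty (E1.obj D ≅ D.obj.obj (op X1))) ∧
      -- `Y` is the Yoneda embedding `n ↦ Fin(–, n)`
      (∀ n : FintypeCat.{0}, Nonempty ((Y.obj n).obj ≅ dirichletSum (fun _ : PUnit => n))) ∧
      -- the adjoint quintuple `L ⊣ E0 ⊣ Cst ⊣ E1 ⊣ Y`
      Nonempty (L ⊣ E0) ∧ Nonempty (E0 ⊣ Cst) ∧ Nonempty (Cst ⊣ E1) ∧ Nonempty (E1 ⊣ Y) := by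
  refine ⟨repFun X0, evalFun X0, repFun X1, evalFun X1, yonFun,
    fun n => ⟨Iso.refl _⟩, fun D => ⟨Iso.refl _⟩, fun n => ⟨Iso.refl _⟩, fun D => ⟨Iso.refl _⟩,
    fun n => ⟨Iso.refl _⟩, ⟨repAdj X0⟩, ⟨cstAdj⟩, ⟨repAdj X1⟩, ⟨yonAdj⟩⟩
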